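/- Let X, Y, Z be compact Hausdorff spaces and let A, B, D be MV-subalgebras of C(X), C(Y), C(Z) respectively, and let α : X×(Y×Z) → (X×Y)×Z be the canonical homeomorphism (x,(y,z)) ↦ ((x,y),z). Then the map f ↦ f ∘ α is a bijection from (A ⊗ B) ⊗ D onto A ⊗ (B ⊗ D) preserving ⊕, * and 0; in particular the semisimple tensor product of MV-algebras is associative. -/

import Mathlib

open Set

/-- `A` is an MV-subalgebra of `C(X, ℝ)`: a set of continuous `[0,1]`-valued functions
containing `0` and closed under `f ⊕ g = (f + g) ⊓ 1` and `f* = 1 - f`. -/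
def IsMVSub {X : Type*} [TopologicalSpace X] (A : Set C(X, ℝ)) : Prop :=
  (∀ f ∈ A, ∀ x, f x ∈ Icc (0:ℝ) 1) ∧
  (0 : C(X, ℝ)) ∈ A ∧
  (∀ f ∈ A, ∀ g ∈ A, (f + g) ⊓ 1 ∈ A) ∧
  (∀ f ∈ A, 1 - f ∈ A)

/-- The smallest MV-subalgebra of `C(X, ℝ)` containing `S`. -/
def mvGen {X : Type*} [TopologicalSpace X] (S : Set C(X, ℝ)) : Set C(X, ℝ) :=
  ⋂₀ {A | IsMVSub A ∧ S ⊆ A}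

/-- The semisimple tensor product of MV-subalgebras `A ⊆ C(X, ℝ)` and `B ⊆ C(Y, ℝ)`:
the MV-subalgebra of `C(X × Y, ℝ)` generated by the pointwise products `(x,y) ↦ a x * b y`. -/
def mvTens {X Y : Type*} [TopologicalSpace X] [TopologicalSpace Y]
    (A : Set C(X, ℝ)) (B : Set C(Y, ℝ)) : Set C(X × Y, ℝ) :=
  mvGen {h | ∃ a ∈ A, ∃ b ∈ B, ∀ p : X × Y, h p = a p.1 * b p.2}

section Helpers

theorem inf_eq_min {α : Type*} [LinearOrder α] (a b : α) : a ⊓ b = min a b := rfl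

variable {X : Type*} [TopologicalSpace X]

lemma subset_mvGen (S : Set C(X, ℝ)) : S ⊆ mvGen S :=
  fun f hf => mem_sInter.2 fun _ hA => hA.2 hf

lemma mvGen_subset {S A : Set C(X, ℝ)} (hA : IsMVSub A) (hSA : S ⊆ A) :
    mvGen S ⊆ A := sInter_subset_of_mem ⟨hA, hSA⟩

lemma isMVSub_unit : IsMVSub {f : C(X, ℝ) | ∀ x, f x ∈ Icc (0:ℝ) 1} := by
  refine ⟨fun f hf => hf, ?_, ?_, ?_⟩
  · intro x; simp
  · intro f hf g hg x
    obtain ⟨h1, h1'⟩ := hf x; obtain ⟨h2, h2'⟩ := hg x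
    simp only [ContinuousMap.inf_apply, ContinuousMap.add_apply, ContinuousMap.one_apply,
      inf_eq_min, mem_Icc]
    exact ⟨le_min (by linarith) (by linarith), min_le_right _ _⟩
  · intro f hf x
    obtain ⟨h1, h2⟩ := hf x
    simp only [ContinuousMap.sub_apply, ContinuousMap.one_apply, mem_Icc]
    exact ⟨by linarith, by linarith⟩

lemma mvGen_bounds {S : Set C(X, ℝ)} (hS : ∀ f ∈ S, ∀ x, f x ∈ Icc (0:ℝ) 1) :
    ∀ f ∈ mvGen S, ∀ x, f x ∈ Icc (0:ℝ) 1 :=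
  fun f hf => mvGen_subset isMVSub_unit (fun g hg => hS g hg) hf

lemma isMVSub_mvGen {S : Set C(X, ℝ)} (hS : ∀ f ∈ S, ∀ x, f x ∈ Icc (0:ℝ) 1) :
    IsMVSub (mvGen S) := by
  refine ⟨mvGen_bounds hS, ?_, ?_, ?_⟩
  · exact mem_sInter.2 fun A hA => hA.1.2.1
  · intro f hf g hg
    exact mem_sInter.2 fun A hA => hA.1.2.2.1 f (hf A hA) g (hg A hA)
  · intro f hf
    exact mem_sInter.2 fun A hA => hA.1.2.2.2 f (hf A hA)

lemma one_mem {A : Set C(X, ℝ)} (hA : IsMVSub A) : (1 : C(X, ℝ)) ∈ A := by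
  have := hA.2.2.2 0 hA.2.1
  simpa using this

lemma inf_mem {A : Set C(X, ℝ)} (hA : IsMVSub A) {f g : C(X, ℝ)}
    (hf : f ∈ A) (hg : g ∈ A) : f ⊓ g ∈ A := by
  have h1 : 1 - f ∈ A := hA.2.2.2 f hf
  have h2 : ((1 - f) + g) ⊓ 1 ∈ A := hA.2.2.1 _ h1 _ hg
  have h3 : 1 - (((1 - f) + g) ⊓ 1) ∈ A := hA.2.2.2 _ h2
  have h4 : ((1 - f) + (1 - (((1 - f) + g) ⊓ 1))) ⊓ 1 ∈ A := hA.2.2.1 _ h1 _ h3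
  have h5 := hA.2.2.2 _ h4
  convert h5 using 1
  ext x
  obtain ⟨hf0, hf1⟩ := hA.1 f hf x
  obtain ⟨hg0, hg1⟩ := hA.1 g hg x
  simp only [ContinuousMap.sub_apply, ContinuousMap.one_apply, ContinuousMap.add_apply,
    ContinuousMap.inf_apply, inf_eq_min]
  rcases le_total (f x) (g x) with h | h
  · have e1 : min (1 - f x + g x) 1 = 1 := min_eq_right (by linarith)
    rw [e1]
    have e2 : min (1 - f x + (1 - 1)) 1 = 1 - f x + (1 - 1) := min_eq_left (by linarith)
    rw [e2, min_eq_left h]; ring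
  · have e1 : min (1 - f x + g x) 1 = 1 - f x + g x := min_eq_left (by linarith)
    rw [e1]
    have e2 : min (1 - f x + (1 - (1 - f x + g x))) 1 = 1 - f x + (1 - (1 - f x + g x)) :=
      min_eq_left (by linarith)
    rw [e2, min_eq_right h]; ring

lemma real_aux1 {a b d : ℝ} (ha : 0 ≤ a) (hb : 0 ≤ b) (hd0 : 0 ≤ d) (hd1 : d ≤ 1) :
    min (a + b) 1 * d = min (min (a * d + b * d) 1) d := by
  have h1 : a * d + b * d = (a + b) * d := by ring
  rcases le_total (a + b) 1 with h | h
  · have h2 : (a + b) * d ≤ d := by nlinarith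
    rw [min_eq_left h, h1, min_eq_left (h2.trans hd1), min_eq_left h2]
  · have h2 : d ≤ (a + b) * d := by nlinarith
    rcases le_total ((a + b) * d) 1 with h3 | h3
    · rw [min_eq_right h, h1, min_eq_left h3, min_eq_right h2, one_mul]
    · rw [min_eq_right h, h1, min_eq_right h3, min_eq_right hd1, one_mul]

lemma real_aux2 {a d : ℝ} (ha1 : a ≤ 1) (hd0 : 0 ≤ d) :
    (1 - a) * d = 1 - min ((1 - d) + a * d) 1 := by
  have h : (1 - d) + a * d ≤ 1 := by nlinarith
  rw [min_eq_left h]; ring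

/-- Core induction: if the products of generators with `k ∘ π`-type functions are
in `G`, so are products of arbitrary elements of `mvGen S` with `k`. -/
lemma core_mul {V W : Type*} [TopologicalSpace V] [TopologicalSpace W]
    (S : Set C(V, ℝ)) (hS : ∀ f ∈ S, ∀ x, f x ∈ Icc (0:ℝ) 1)
    (G : Set C(W, ℝ)) (hG : IsMVSub G)
    (π : C(W, V)) (k : C(W, ℝ)) (hk : k ∈ G)
    (hbase : ∀ s ∈ S, ∀ h : C(W, ℝ), (∀ w, h w = s (π w) * k w) → h ∈ G) :
    ∀ f ∈ mvGen S, ∀ h : C(W, ℝ), (∀ w, h w = f (π w) * k w) → h ∈ G := by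
  obtain ⟨hk0, hk1⟩ : (∀ w, 0 ≤ k w) ∧ (∀ w, k w ≤ 1) :=
    ⟨fun w => (hG.1 k hk w).1, fun w => (hG.1 k hk w).2⟩
  set P : Set C(V, ℝ) :=
    {f | (∀ x, f x ∈ Icc (0:ℝ) 1) ∧ ∀ h : C(W, ℝ), (∀ w, h w = f (π w) * k w) → h ∈ G}
    with hP
  have hPsub : IsMVSub P := by
    refine ⟨fun f hf => hf.1, ⟨by simp, ?_⟩, ?_, ?_⟩
    · intro h hh
      have : h = 0 := by ext w; simp [hh w]
      rw [this]; exact hG.2.1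
    · rintro f ⟨hfb, hf⟩ g ⟨hgb, hg⟩
      refine ⟨fun x => ?_, ?_⟩
      · obtain ⟨h1, h1'⟩ := hfb x; obtain ⟨h2, h2'⟩ := hgb x
        simp only [ContinuousMap.inf_apply, ContinuousMap.add_apply, ContinuousMap.one_apply,
          inf_eq_min, mem_Icc]
        exact ⟨le_min (by linarith) (by linarith), min_le_right _ _⟩
      · intro h hh
        have h1 : f.comp π * k ∈ G := hf _ (fun w => by simp)
        have h2 : g.comp π * k ∈ G := hg _ (fun w => by simp)
        have h3 : ((f.comp π * k + g.comp π * k) ⊓ 1) ⊓ k ∈ G :=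
          inf_mem hG (hG.2.2.1 _ h1 _ h2) hk
        have : h = ((f.comp π * k + g.comp π * k) ⊓ 1) ⊓ k := by
          ext w
          rw [hh w]
          simp only [ContinuousMap.inf_apply, ContinuousMap.add_apply, ContinuousMap.one_apply,
            ContinuousMap.mul_apply, ContinuousMap.comp_apply, inf_eq_min]
          exact real_aux1 (hfb (π w)).1 (hgb (π w)).1 (hk0 w) (hk1 w)
        rw [this]; exact h3
    · rintro f ⟨hfb, hf⟩
      refine ⟨fun x => ?_, ?_⟩
      · obtain ⟨h1, h2⟩ := hfb x
        simp only [ContinuousMap.sub_apply, ContinuousMap.one_apply, mem_Icc]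
        exact ⟨by linarith, by linarith⟩
      · intro h hh
        have h1 : f.comp π * k ∈ G := hf _ (fun w => by simp)
        have h2 : 1 - (((1 - k) + f.comp π * k) ⊓ 1) ∈ G :=
          hG.2.2.2 _ (hG.2.2.1 _ (hG.2.2.2 k hk) _ h1)
        have : h = 1 - (((1 - k) + f.comp π * k) ⊓ 1) := by
          ext w
          rw [hh w]
          simp only [ContinuousMap.sub_apply, ContinuousMap.one_apply, ContinuousMap.inf_apply,
            ContinuousMap.add_apply, ContinuousMap.mul_apply, ContinuousMap.comp_apply, inf_eq_min]
          exact real_aux2 (hfb (π w)).2 (hk0 w)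
        rw [this]; exact h2
  have hSP : S ⊆ P := fun s hs => ⟨hS s hs, fun h hh => hbase s hs h hh⟩
  intro f hf
  exact (mvGen_subset hPsub hSP hf).2

end Helpers

section Assoc

variable {X Y Z : Type*} [TopologicalSpace X] [TopologicalSpace Y] [TopologicalSpace Z]

lemma tens_gen_bounds {A : Set C(X, ℝ)} {B : Set C(Y, ℝ)} (hA : IsMVSub A) (hB : IsMVSub B) :
    ∀ h ∈ {h : C(X × Y, ℝ) | ∃ a ∈ A, ∃ b ∈ B, ∀ p : X × Y, h p = a p.1 * b p.2},
      ∀ p, h p ∈ Icc (0:ℝ) 1 := by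
  rintro h ⟨a, ha, b, hb, hh⟩ p
  obtain ⟨ha0, ha1⟩ := hA.1 a ha p.1
  obtain ⟨hb0, hb1⟩ := hB.1 b hb p.2
  rw [hh p]
  exact ⟨mul_nonneg ha0 hb0, by nlinarith⟩

lemma isMVSub_mvTens {A : Set C(X, ℝ)} {B : Set C(Y, ℝ)} (hA : IsMVSub A) (hB : IsMVSub B) :
    IsMVSub (mvTens A B) :=
  isMVSub_mvGen (tens_gen_bounds hA hB)

lemma mvTens_bounds {A : Set C(X, ℝ)} {B : Set C(Y, ℝ)} (hA : IsMVSub A) (hB : IsMVSub B) :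
    ∀ f ∈ mvTens A B, ∀ p, f p ∈ Icc (0:ℝ) 1 :=
  mvGen_bounds (tens_gen_bounds hA hB)

/-- Triple products on `(X × Y) × Z`. -/
def tripleL (A : Set C(X, ℝ)) (B : Set C(Y, ℝ)) (D : Set C(Z, ℝ)) : Set C((X × Y) × Z, ℝ) :=
  {h | ∃ a ∈ A, ∃ b ∈ B, ∃ d ∈ D, ∀ p : (X × Y) × Z, h p = a p.1.1 * b p.1.2 * d p.2}

/-- Triple products on `X × (Y × Z)`. -/
def tripleR (A : Set C(X, ℝ)) (B : Set C(Y, ℝ)) (D : Set C(Z, ℝ)) : Set C(X × (Y × Z), ℝ) :=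
  {h | ∃ a ∈ A, ∃ b ∈ B, ∃ d ∈ D, ∀ p : X × (Y × Z), h p = a p.1 * b p.2.1 * d p.2.2}

lemma tripleL_bounds {A : Set C(X, ℝ)} {B : Set C(Y, ℝ)} {D : Set C(Z, ℝ)}
    (hA : IsMVSub A) (hB : IsMVSub B) (hD : IsMVSub D) :
    ∀ h ∈ tripleL A B D, ∀ p, h p ∈ Icc (0:ℝ) 1 := by
  rintro h ⟨a, ha, b, hb, d, hd, hh⟩ p
  obtain ⟨ha0, ha1⟩ := hA.1 a ha p.1.1
  obtain ⟨hb0, hb1⟩ := hB.1 b hb p.1.2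
  obtain ⟨hd0, hd1⟩ := hD.1 d hd p.2
  rw [hh p]
  exact ⟨by positivity, mul_le_one₀ (mul_le_one₀ ha1 hb0 hb1) hd0 hd1⟩

lemma tripleR_bounds {A : Set C(X, ℝ)} {B : Set C(Y, ℝ)} {D : Set C(Z, ℝ)}
    (hA : IsMVSub A) (hB : IsMVSub B) (hD : IsMVSub D) :
    ∀ h ∈ tripleR A B D, ∀ p, h p ∈ Icc (0:ℝ) 1 := by
  rintro h ⟨a, ha, b, hb, d, hd, hh⟩ p
  obtain ⟨ha0, ha1⟩ := hA.1 a ha p.1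
  obtain ⟨hb0, hb1⟩ := hB.1 b hb p.2.1
  obtain ⟨hd0, hd1⟩ := hD.1 d hd p.2.2
  rw [hh p]
  exact ⟨by positivity, mul_le_one₀ (mul_le_one₀ ha1 hb0 hb1) hd0 hd1⟩

lemma L1 {A : Set C(X, ℝ)} {B : Set C(Y, ℝ)} {D : Set C(Z, ℝ)}
    (hA : IsMVSub A) (hB : IsMVSub B) (hD : IsMVSub D) :
    mvTens (mvTens A B) D = mvGen (tripleL A B D) := by
  have hG : IsMVSub (mvGen (tripleL A B D)) := isMVSub_mvGen (tripleL_bounds hA hB hD)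
  apply Subset.antisymm
  · apply mvGen_subset hG
    rintro h ⟨f, hf, d, hd, hh⟩
    have hk : d.comp ⟨Prod.snd, continuous_snd⟩ ∈ mvGen (tripleL A B D) :=
      subset_mvGen _ ⟨1, one_mem hA, 1, one_mem hB, d, hd, fun p => by simp⟩
    refine core_mul _ (tens_gen_bounds hA hB) _ hG ⟨Prod.fst, continuous_fst⟩ _ hk
      ?_ f hf h (fun w => by rw [hh w]; simp)
    rintro s ⟨a, ha, b, hb, hs⟩ h' hh'
    exact subset_mvGen _ ⟨a, ha, b, hb, d, hd, fun p => by
      rw [hh' p]; simp only [ContinuousMap.coe_mk, ContinuousMap.comp_apply]; rw [hs p.1]⟩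
  · apply mvGen_subset (isMVSub_mvTens (isMVSub_mvTens hA hB) hD)
    rintro h ⟨a, ha, b, hb, d, hd, hh⟩
    apply subset_mvGen
    refine ⟨a.comp ⟨Prod.fst, continuous_fst⟩ * b.comp ⟨Prod.snd, continuous_snd⟩, ?_, d, hd,
      fun p => by rw [hh p]; simp⟩
    exact subset_mvGen _ ⟨a, ha, b, hb, fun p => by simp⟩

lemma L2 {A : Set C(X, ℝ)} {B : Set C(Y, ℝ)} {D : Set C(Z, ℝ)}
    (hA : IsMVSub A) (hB : IsMVSub B) (hD : IsMVSub D) :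
    mvTens A (mvTens B D) = mvGen (tripleR A B D) := by
  have hG : IsMVSub (mvGen (tripleR A B D)) := isMVSub_mvGen (tripleR_bounds hA hB hD)
  apply Subset.antisymm
  · apply mvGen_subset hG
    rintro h ⟨a, ha, g, hg, hh⟩
    have hk : a.comp ⟨Prod.fst, continuous_fst⟩ ∈ mvGen (tripleR A B D) :=
      subset_mvGen _ ⟨a, ha, 1, one_mem hB, 1, one_mem hD, fun p => by simp⟩
    refine core_mul _ (tens_gen_bounds hB hD) _ hG ⟨Prod.snd, continuous_snd⟩ _ hk
      ?_ g hg h (fun w => by rw [hh w]; simp; ring)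
    rintro s ⟨b, hb, d, hd, hs⟩ h' hh'
    exact subset_mvGen _ ⟨a, ha, b, hb, d, hd, fun p => by
      rw [hh' p]; simp only [ContinuousMap.coe_mk, ContinuousMap.comp_apply]; rw [hs p.2]; ring⟩
  · apply mvGen_subset (isMVSub_mvTens hA (isMVSub_mvTens hB hD))
    rintro h ⟨a, ha, b, hb, d, hd, hh⟩
    apply subset_mvGen
    refine ⟨a, ha, b.comp ⟨Prod.fst, continuous_fst⟩ * d.comp ⟨Prod.snd, continuous_snd⟩, ?_,
      fun p => by rw [hh p]; simp; ring⟩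
    exact subset_mvGen _ ⟨b, hb, d, hd, fun p => by simp⟩

end Assoc

/-- precomposition with the canonical homeomorphism
`α : X × (Y × Z) → (X × Y) × Z` is a bijection from `(A ⊗ B) ⊗ D` onto `A ⊗ (B ⊗ D)`
preserving `⊕`, `*` and `0`; in particular the semisimple tensor product of MV-algebras
is associative. -/
theorem stmt3 {X Y Z : Type*}
    [TopologicalSpace X] [CompactSpace X] [T2Space X]
    [TopologicalSpace Y] [CompactSpace Y] [T2Space Y]
    [TopologicalSpace Z] [CompactSpace Z] [T2Space Z]
    (A : Set C(X, ℝ)) (B : Set C(Y, ℝ)) (D : Set C(Z, ℝ))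
    (hA : IsMVSub A) (hB : IsMVSub B) (hD : IsMVSub D)
    (Φ : C((X × Y) × Z, ℝ) → C(X × (Y × Z), ℝ))
    (hΦ : ∀ (f : C((X × Y) × Z, ℝ)) (p : X × (Y × Z)), Φ f p = f ((p.1, p.2.1), p.2.2)) :
    Set.BijOn Φ (mvTens (mvTens A B) D) (mvTens A (mvTens B D)) ∧
    (∀ f g : C((X × Y) × Z, ℝ), Φ ((f + g) ⊓ 1) = (Φ f + Φ g) ⊓ 1) ∧
    (∀ f : C((X × Y) × Z, ℝ), Φ (1 - f) = 1 - Φ f) ∧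
    Φ 0 = 0 := by
  -- the inverse of Φ
  set Ψ : C(X × (Y × Z), ℝ) → C((X × Y) × Z, ℝ) := fun g =>
    g.comp ⟨fun q => (q.1.1, (q.1.2, q.2)), by fun_prop⟩ with hΨdef
  have hΨ : ∀ (g : C(X × (Y × Z), ℝ)) (q : (X × Y) × Z), Ψ g q = g (q.1.1, (q.1.2, q.2)) := by
    intro g q; simp [hΨdef]
  have hΨΦ : ∀ f, Ψ (Φ f) = f := by
    intro f; ext q; rw [hΨ, hΦ]
  have hΦΨ : ∀ g, Φ (Ψ g) = g := by
    intro g; ext p; rw [hΦ, hΨ]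
  have hop1 : ∀ f g : C((X × Y) × Z, ℝ), Φ ((f + g) ⊓ 1) = (Φ f + Φ g) ⊓ 1 := by
    intro f g; ext p
    simp [hΦ, min_def]
  have hop2 : ∀ f : C((X × Y) × Z, ℝ), Φ (1 - f) = 1 - Φ f := by
    intro f; ext p; simp [hΦ]
  have hop0 : Φ 0 = 0 := by
    ext p; simp [hΦ]
  have hΨop1 : ∀ f g : C(X × (Y × Z), ℝ), Ψ ((f + g) ⊓ 1) = (Ψ f + Ψ g) ⊓ 1 := by
    intro f g; ext q; simp [hΨ, min_def]
  have hΨop2 : ∀ f : C(X × (Y × Z), ℝ), Ψ (1 - f) = 1 - Ψ f := by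
    intro f; ext q; simp [hΨ]
  have hΨop0 : Ψ 0 = 0 := by
    ext q; simp [hΨ]
  have hG1 : IsMVSub (mvGen (tripleL A B D)) := isMVSub_mvGen (tripleL_bounds hA hB hD)
  have hG2 : IsMVSub (mvGen (tripleR A B D)) := isMVSub_mvGen (tripleR_bounds hA hB hD)
  -- Φ maps mvGen (tripleL) into mvGen (tripleR)
  have hmaps : ∀ f ∈ mvGen (tripleL A B D), Φ f ∈ mvGen (tripleR A B D) := by
    have hsub : IsMVSub {f : C((X × Y) × Z, ℝ) | Φ f ∈ mvGen (tripleR A B D)} := by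
      refine ⟨?_, ?_, ?_, ?_⟩
      · intro f hf p
        have hb := mvGen_bounds (tripleR_bounds hA hB hD) _ hf (p.1.1, (p.1.2, p.2))
        rw [hΦ] at hb
        simpa using hb
      · simp only [mem_setOf_eq, hop0]; exact hG2.2.1
      · intro f hf g hg
        simp only [mem_setOf_eq, hop1] at *
        exact hG2.2.2.1 _ hf _ hg
      · intro f hf
        simp only [mem_setOf_eq, hop2] at *
        exact hG2.2.2.2 _ hf
    refine fun f hf => mvGen_subset hsub ?_ hf
    rintro h ⟨a, ha, b, hb, d, hd, hh⟩
    exact subset_mvGen _ ⟨a, ha, b, hb, d, hd, fun p => by rw [hΦ, hh]⟩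
  have hmaps' : ∀ g ∈ mvGen (tripleR A B D), Ψ g ∈ mvGen (tripleL A B D) := by
    have hsub : IsMVSub {g : C(X × (Y × Z), ℝ) | Ψ g ∈ mvGen (tripleL A B D)} := by
      refine ⟨?_, ?_, ?_, ?_⟩
      · intro g hg p
        have hb := mvGen_bounds (tripleL_bounds hA hB hD) _ hg ((p.1, p.2.1), p.2.2)
        rw [hΨ] at hb
        simpa using hb
      · simp only [mem_setOf_eq, hΨop0]; exact hG1.2.1
      · intro f hf g hg
        simp only [mem_setOf_eq, hΨop1] at *
        exact hG1.2.2.1 _ hf _ hg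
      · intro f hf
        simp only [mem_setOf_eq, hΨop2] at *
        exact hG1.2.2.2 _ hf
    refine fun g hg => mvGen_subset hsub ?_ hg
    rintro h ⟨a, ha, b, hb, d, hd, hh⟩
    exact subset_mvGen _ ⟨a, ha, b, hb, d, hd, fun q => by rw [hΨ, hh]⟩
  have hinj : Function.Injective Φ := fun f g h => by
    rw [← hΨΦ f, h, hΨΦ g]
  refine ⟨⟨?_, fun f _ g _ h => hinj h, ?_⟩, hop1, hop2, hop0⟩
  · intro f hf
    rw [L2 hA hB hD]
    rw [L1 hA hB hD] at hf
    exact hmaps f hf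
  · intro g hg
    rw [L2 hA hB hD] at hg
    exact ⟨Ψ g, by rw [L1 hA hB hD]; exact hmaps' g hg, hΦΨ g⟩
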